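/- Let ψ ∈ D_ℝ and φ = Γ₁[ψ]. Then for any 0 ≤ S ≤ T < ∞: φ(T) = 0 if and only if ψ^S(T − S) = inf_{s∈[0,T−S]} ψ^S(s) and ψ^S(T − S) ≤ −φ(S). Moreover, if φ(S) = 0 and δ > 0, then φ(T) = 0 for all T ∈ [S, S + δ] if and only if ψ is nonincreasing on [S, S + δ]. -/

import Mathlib

open MeasureTheory Filter Set
open scoped NNReal ENNReal BoundedContinuousFunction Topology

noncomputable section

/-- Càdlàg on `[0,∞)`: right-continuous at every `t ≥ 0`, with left limits at
every `t > 0` (along `[0,t)`). -/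
def CadlagOn {E : Type*} [TopologicalSpace E] (f : ℝ → E) : Prop :=
  (∀ t : ℝ, 0 ≤ t → ContinuousWithinAt f (Set.Ici t) t) ∧
  (∀ t : ℝ, 0 < t → ∃ l : E, Filter.Tendsto f (nhdsWithin t (Set.Ico 0 t)) (nhds l))

/-- `D_ℝ`: real-valued càdlàg paths on `[0,∞)`. -/
def DR (f : ℝ → ℝ) : Prop := CadlagOn f

/-- `D_ℝ^↑`: nonnegative nondecreasing real-valued càdlàg paths on `[0,∞)`. -/
def DRup (f : ℝ → ℝ) : Prop :=
  CadlagOn f ∧ (∀ t : ℝ, 0 ≤ t → 0 ≤ f t) ∧ MonotoneOn f (Set.Ici 0)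

/-- `D_M`: càdlàg paths with values in the space of finite nonnegative measures
on `[0,∞)`, equipped with the topology of weak convergence. -/
def DM (ζ : ℝ → FiniteMeasure ℝ≥0) : Prop := CadlagOn ζ

/-- `D_M^↑`: paths in `D_M` such that `t ↦ ∫ f dζ_t` is nondecreasing for every
nonnegative bounded continuous `f` on `[0,∞)`. -/
def DMup (ζ : ℝ → FiniteMeasure ℝ≥0) : Prop :=
  CadlagOn ζ ∧
  ∀ f : ℝ≥0 →ᵇ ℝ≥0, MonotoneOn (fun t => (ζ t).testAgainstNN f) (Set.Ici 0)

/-- First component of the Skorokhod map on the half-line: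
`Γ₁[ψ](t) = ψ(t) − inf_{s∈[0,t]} (ψ(s) ∧ 0)`. -/
def Gamma1 (ψ : ℝ → ℝ) (t : ℝ) : ℝ :=
  ψ t - sInf ((fun s => min (ψ s) 0) '' Set.Icc 0 t)

/-- Second component of the Skorokhod map on the half-line: `Γ₂[ψ] = Γ₁[ψ] − ψ`. -/
def Gamma2 (ψ : ℝ → ℝ) (t : ℝ) : ℝ := Gamma1 ψ t - ψ t

/-- Extension of `g : [0,∞) → ℝ` by `0` on `(-∞,0)`. -/
def lsExt (g : ℝ → ℝ) : ℝ → ℝ := fun t => if t < 0 then 0 else g t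

/- The Lebesgue–Stieltjes measure `m^g(B) = g(0)δ₀(B) + ∫_{(0,∞)} 1_B dg` of a
nonnegative nondecreasing right-continuous `g` on `[0,∞)`, realized as the
Stieltjes measure of the extension of `g` by `0` on `(-∞,0)`. -/
open scoped Classical in
def lsMeasure (g : ℝ → ℝ) : Measure ℝ :=
  if h : Monotone (lsExt g) ∧ ∀ t, ContinuousWithinAt (lsExt g) (Set.Ici t) t then
    StieltjesFunction.measure ⟨lsExt g, h.1, h.2⟩
  else 0

/-- The measure-valued Skorokhod problem (MVSP): `(ξ,β,ι)` solves the MVSP for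
the data `(α,μ)`. -/
def SolvesMVSP (α : ℝ → FiniteMeasure ℝ≥0) (μ : ℝ → ℝ)
    (ξ β : ℝ → FiniteMeasure ℝ≥0) (ι : ℝ → ℝ) : Prop :=
  (∀ x : ℝ≥0, ∀ t : ℝ, 0 ≤ t →
    (ξ t (Set.Iic x) : ℝ) = (α t (Set.Iic x) : ℝ) - μ t + (β t (Set.Ioi x) : ℝ) + ι t) ∧
  (∀ x : ℝ≥0, ∀ᵐ t ∂(lsMeasure (fun s => (β s (Set.Ioi x) : ℝ))), (ξ t (Set.Iic x) : ℝ) = 0) ∧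
  (∀ x : ℝ≥0, ∀ᵐ t ∂(lsMeasure ι), (ξ t (Set.Iic x) : ℝ) = 0) ∧
  (∀ t : ℝ, 0 ≤ t → (β t Set.univ : ℝ) + ι t = μ t)

/-- System (30): `(ξ,β,ι)` solves the MVSP for `(α, μ+ρ)` and `ξ_t[0,t) = 0`
for every `t > 0`. -/
def Solves30 (α : ℝ → FiniteMeasure ℝ≥0) (μ : ℝ → ℝ)
    (ξ β : ℝ → FiniteMeasure ℝ≥0) (ι ρ : ℝ → ℝ) : Prop :=
  SolvesMVSP α (fun t => μ t + ρ t) ξ β ι ∧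
  ∀ t : ℝ, 0 < t → (ξ t (Set.Iio (Real.toNNReal t)) : ℝ) = 0

/-- A minimal solution of system (30): a solution (lying in the appropriate
path spaces) whose reneging function `ρ` is pointwise below that of any other
solution. -/
def IsMinimalSol30 (α : ℝ → FiniteMeasure ℝ≥0) (μ : ℝ → ℝ)
    (ξ β : ℝ → FiniteMeasure ℝ≥0) (ι ρ : ℝ → ℝ) : Prop :=
  (DM ξ ∧ DMup β ∧ DRup ι ∧ DRup ρ ∧ Solves30 α μ ξ β ι ρ) ∧
  ∀ (ξ' β' : ℝ → FiniteMeasure ℝ≥0) (ι' ρ' : ℝ → ℝ),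
    DM ξ' → DMup β' → DRup ι' → DRup ρ' → Solves30 α μ ξ' β' ι' ρ' →
    ∀ t : ℝ, 0 ≤ t → ρ t ≤ ρ' t

/-- The (topological) support of a finite measure on `[0,∞)`: the set of points
all of whose open neighborhoods have positive measure. -/
def measSupport (ν : FiniteMeasure ℝ≥0) : Set ℝ≥0 :=
  {x : ℝ≥0 | ∀ u : Set ℝ≥0, IsOpen u → x ∈ u → ν u ≠ 0}

/-- `σ(ν) = inf supp[ν]`, with value `∞` when `ν = 0`. -/
def sigmaOf (ν : FiniteMeasure ℝ≥0) : ℝ≥0∞ :=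
  sInf ((fun x : ℝ≥0 => (x : ℝ≥0∞)) '' measSupport ν)

/-- Assumption A on the data `(α,μ)`. -/
def AssumptionA (α : ℝ → FiniteMeasure ℝ≥0) (μ : ℝ → ℝ) : Prop :=
  (∃ (ξ0 : FiniteMeasure ℝ≥0) (a0 : ℝ → FiniteMeasure ℝ≥0)
      (lam : ℝ → ℝ) (ν : FiniteMeasure ℝ≥0),
    (∀ x : ℝ≥0, ξ0 {x} = 0) ∧
    ContinuousOn a0 (Set.Ici 0) ∧ DMup a0 ∧
    (∀ t : ℝ, 0 ≤ t → ∀ x : ℝ≥0, a0 t {x} = 0) ∧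
    Measurable lam ∧ (∀ s : ℝ, 0 ≤ s → 0 ≤ lam s) ∧
    (∀ t : ℝ, 0 ≤ t → α t = a0 t + ξ0) ∧
    (∀ t : ℝ, 0 ≤ t → ∀ x : ℝ≥0, (a0 t (Set.Iic x) : ℝ) =
      ∫ s in Set.Icc (0:ℝ) t,
        (if s ≤ (x:ℝ) then lam s * (ν (Set.Iic (Real.toNNReal ((x:ℝ) - s))) : ℝ) else 0)) ∧
    (∀ t : ℝ, 0 ≤ t →
      Filter.Tendsto (fun x : ℝ≥0 =>
          sSup ((fun s => lam s * (ν (Set.Iic x) : ℝ)) '' Set.Icc (0:ℝ) t))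
        (nhdsWithin 0 (Set.Ioi 0)) (nhds 0))) ∧
  (∃ μ0 m : ℝ → ℝ,
    ContinuousOn μ0 (Set.Ici 0) ∧ (∀ t : ℝ, 0 ≤ t → 0 ≤ μ0 t) ∧
    MonotoneOn μ0 (Set.Ici 0) ∧
    Measurable m ∧ (∀ s : ℝ, 0 ≤ s → 0 ≤ m s) ∧
    (∀ t : ℝ, 0 ≤ t → MeasureTheory.IntegrableOn m (Set.Icc 0 t)) ∧
    (∀ t : ℝ, 0 ≤ t → 0 < sInf (m '' Set.Icc (0:ℝ) t)) ∧
    (∀ t : ℝ, 0 ≤ t → μ t = μ0 t + ∫ s in Set.Icc (0:ℝ) t, m s))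

/-- Characterization of the zero set of `φ = Γ₁[ψ]`: for `0 ≤ S ≤ T`, `φ(T) = 0`
iff `ψ^S(T−S)` attains the infimum of `ψ^S` over `[0,T−S]` and is `≤ −φ(S)`;
moreover if `φ(S) = 0`, then `φ ≡ 0` on `[S,S+δ]` iff `ψ` is nonincreasing on
`[S,S+δ]`. -/
lemma skz_locbdd (ψ : ℝ → ℝ) (hc : ∀ t : ℝ, 0 ≤ t → ContinuousWithinAt ψ (Set.Ici t) t)
    (hl : ∀ t : ℝ, 0 < t → ∃ l : ℝ, Filter.Tendsto ψ (nhdsWithin t (Set.Ico 0 t)) (nhds l)) (T : ℝ) (x : ℝ) :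
    ∃ U : Set ℝ, U ∈ nhds x ∧ BddBelow (ψ '' (U ∩ Set.Icc 0 T)) := by
  by_cases hx : x ∈ Set.Icc (0:ℝ) T
  · have h1 : ∀ᶠ y in nhdsWithin x (Set.Ici x), ψ x - 1 < ψ y :=
      (hc x hx.1).eventually (eventually_gt_nhds (by linarith))
    obtain ⟨ε, hε, hball⟩ := Metric.mem_nhdsWithin_iff.1 h1
    rcases eq_or_lt_of_le hx.1 with h0 | hpos
    · refine ⟨Metric.ball x ε, Metric.ball_mem_nhds _ hε, ψ x - 1, ?_⟩
      rintro v ⟨y, ⟨hyb, hy⟩, rfl⟩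
      exact le_of_lt (hball ⟨hyb, Set.mem_Ici.2 (h0 ▸ hy.1)⟩)
    · obtain ⟨l, hl⟩ := hl x hpos
      have h2 : ∀ᶠ y in nhdsWithin x (Set.Ico 0 x), l - 1 < ψ y :=
        hl.eventually (eventually_gt_nhds (by linarith))
      obtain ⟨ε', hε', hball'⟩ := Metric.mem_nhdsWithin_iff.1 h2
      refine ⟨Metric.ball x (min ε ε'), Metric.ball_mem_nhds _ (lt_min hε hε'),
        min (ψ x - 1) (l - 1), ?_⟩
      rintro v ⟨y, ⟨hyb, hy⟩, rfl⟩
      rw [Metric.mem_ball, lt_min_iff] at hyb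
      rcases le_or_gt x y with hxy | hxy
      · exact le_trans (min_le_left _ _) (le_of_lt (hball ⟨hyb.1, hxy⟩))
      · exact le_trans (min_le_right _ _) (le_of_lt (hball' ⟨hyb.2, ⟨hy.1, hxy⟩⟩))
  · refine ⟨(Set.Icc (0:ℝ) T)ᶜ, (isClosed_Icc.isOpen_compl).mem_nhds hx, 0, ?_⟩
    rintro v ⟨y, ⟨hyc, hy⟩, rfl⟩
    exact absurd hy hyc

lemma skz_bdd (ψ : ℝ → ℝ) (hc : ∀ t : ℝ, 0 ≤ t → ContinuousWithinAt ψ (Set.Ici t) t)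
    (hl : ∀ t : ℝ, 0 < t → ∃ l : ℝ, Filter.Tendsto ψ (nhdsWithin t (Set.Ico 0 t)) (nhds l)) (T : ℝ) : BddBelow (ψ '' Set.Icc 0 T) := by
  choose U hU hB using skz_locbdd ψ hc hl T
  obtain ⟨t, -, hcov⟩ := isCompact_Icc.elim_nhds_subcover U (fun x _ => hU x)
  have hsub : ψ '' Set.Icc 0 T ⊆ ⋃ x ∈ (t : Set ℝ), ψ '' (U x ∩ Set.Icc 0 T) := by
    rintro v ⟨y, hy, rfl⟩
    obtain ⟨x, hxt, hyU⟩ := Set.mem_iUnion₂.1 (hcov hy)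
    exact Set.mem_iUnion₂.2 ⟨x, hxt, ⟨y, ⟨hyU, hy⟩, rfl⟩⟩
  exact BddBelow.mono hsub ((Set.Finite.bddBelow_biUnion t.finite_toSet).2 fun x _ => hB x)

lemma skz_sInf_sub (A : Set ℝ) (hne : A.Nonempty) (hbd : BddBelow A) (c : ℝ) :
    sInf ((fun x => x - c) '' A) = sInf A - c := by
  obtain ⟨b, hb⟩ := hbd
  have hbd' : BddBelow ((fun x => x - c) '' A) := by
    refine ⟨b - c, ?_⟩
    rintro _ ⟨x, hx, rfl⟩
    exact sub_le_sub_right (hb hx) c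
  apply le_antisymm
  · rw [le_sub_iff_add_le]
    apply le_csInf hne
    intro x hx
    have : sInf ((fun x => x - c) '' A) ≤ x - c := csInf_le hbd' ⟨x, hx, rfl⟩
    linarith
  · apply le_csInf (hne.image _)
    rintro _ ⟨x, hx, rfl⟩
    exact sub_le_sub_right (csInf_le ⟨b, hb⟩ hx) c

theorem skorokhod_map_zero_set
    (ψ : ℝ → ℝ) (hψ : DR ψ) :
    (∀ S T : ℝ, 0 ≤ S → S ≤ T →
      (Gamma1 ψ T = 0 ↔
        (ψ T - ψ S = sInf ((fun s => ψ (S + s) - ψ S) '' Set.Icc 0 (T - S)) ∧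
         ψ T - ψ S ≤ -(Gamma1 ψ S)))) ∧
    (∀ S δ : ℝ, 0 ≤ S → 0 < δ → Gamma1 ψ S = 0 →
      ((∀ T ∈ Set.Icc S (S + δ), Gamma1 ψ T = 0) ↔
        AntitoneOn ψ (Set.Icc S (S + δ)))) := by
  have hψ' : (∀ t : ℝ, 0 ≤ t → ContinuousWithinAt ψ (Set.Ici t) t) ∧
      (∀ t : ℝ, 0 < t → ∃ l : ℝ, Filter.Tendsto ψ (nhdsWithin t (Set.Ico 0 t)) (nhds l)) := hψ
  obtain ⟨hc, hl⟩ := hψ'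
  set m : ℝ → ℝ := fun t => sInf ((fun s => min (ψ s) 0) '' Set.Icc 0 t) with hm
  have hbd : ∀ a b : ℝ, 0 ≤ a → BddBelow (ψ '' Set.Icc a b) := fun a b ha =>
    (skz_bdd ψ hc hl b).mono (Set.image_mono (f := ψ) (Set.Icc_subset_Icc ha le_rfl))
  have hbdmin : ∀ a b : ℝ, 0 ≤ a → BddBelow ((fun s => min (ψ s) 0) '' Set.Icc a b) := by
    intro a b ha
    obtain ⟨c, hc⟩ := hbd a b ha
    refine ⟨min c 0, ?_⟩
    rintro _ ⟨u, hu, rfl⟩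
    exact min_le_min (hc ⟨u, hu, rfl⟩) le_rfl
  -- main equivalence in clean form
  have hmain : ∀ S T : ℝ, 0 ≤ S → S ≤ T →
      (Gamma1 ψ T = 0 ↔ (ψ T = sInf (ψ '' Set.Icc S T) ∧ ψ T ≤ m S)) := by
    intro S T hS hST
    have hT : (0:ℝ) ≤ T := hS.trans hST
    have neST : (Set.Icc S T).Nonempty := Set.nonempty_Icc.2 hST
    have ne0S : (Set.Icc 0 S).Nonempty := Set.nonempty_Icc.2 hS
    have hmem : ∀ u ∈ Set.Icc S T, u ∈ Set.Icc (0:ℝ) T := fun u hu =>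
      ⟨hS.trans hu.1, hu.2⟩
    have f1 : ∀ u ∈ Set.Icc (0:ℝ) T, m T ≤ min (ψ u) 0 := fun u hu =>
      csInf_le (hbdmin 0 T le_rfl) ⟨u, hu, rfl⟩
    have f2 : m T ≤ m S :=
      csInf_le_csInf (hbdmin 0 T le_rfl) (ne0S.image _)
        (Set.image_mono (Set.Icc_subset_Icc le_rfl hST))
    have hiff : Gamma1 ψ T = 0 ↔ ψ T = m T := by
      unfold Gamma1
      rw [sub_eq_zero]
    rw [hiff]
    constructor
    · intro h
      refine ⟨le_antisymm ?_ (csInf_le (hbd S T hS) ⟨T, ⟨hST, le_rfl⟩, rfl⟩), h ▸ f2⟩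
      apply le_csInf (neST.image ψ)
      rintro _ ⟨u, hu, rfl⟩
      have := f1 u (hmem u hu)
      have h2 := min_le_left (ψ u) 0
      linarith [h ▸ this]
    · rintro ⟨h1, h2⟩
      have hT0 : ψ T ≤ 0 := by
        have hmS : m S ≤ min (ψ S) 0 := csInf_le (hbdmin 0 S le_rfl) ⟨S, ⟨hS, le_rfl⟩, rfl⟩
        have := min_le_right (ψ S) 0
        linarith
      have h3 : ψ T ≤ sInf ((fun s => min (ψ s) 0) '' Set.Icc S T) := by
        apply le_csInf (neST.image _)
        rintro _ ⟨u, hu, rfl⟩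
        have hu' : ψ T ≤ ψ u := h1 ▸ csInf_le (hbd S T hS) ⟨u, hu, rfl⟩
        exact le_min hu' hT0
      have hsplit : m T = min (m S) (sInf ((fun s => min (ψ s) 0) '' Set.Icc S T)) := by
        have : Set.Icc (0:ℝ) T = Set.Icc 0 S ∪ Set.Icc S T :=
          (Set.Icc_union_Icc_eq_Icc hS hST).symm
        rw [hm]
        simp only
        rw [this, Set.image_union,
          csInf_union (hbdmin 0 S le_rfl) (ne0S.image _) (hbdmin S T hS) (neST.image _)]
      have h4 : ψ T ≤ m T := by rw [hsplit]; exact le_min h2 h3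
      have h5 : m T ≤ ψ T := by
        have := f1 T ⟨hT, le_rfl⟩
        have := min_le_left (ψ T) 0
        linarith
      linarith
  constructor
  · intro S T hS hST
    have hT : (0:ℝ) ≤ T := hS.trans hST
    have neST : (Set.Icc S T).Nonempty := Set.nonempty_Icc.2 hST
    have himg : (fun s => ψ (S + s) - ψ S) '' Set.Icc 0 (T - S)
        = (fun x => x - ψ S) '' (ψ '' Set.Icc S T) := by
      have hIcc : Set.Icc S T = (fun x => S + x) '' Set.Icc 0 (T - S) := by
        rw [Set.image_const_add_Icc]
        congr 1 <;> ring
      rw [hIcc, ← Set.image_comp, ← Set.image_comp]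
      rfl
    have hinf : sInf ((fun s => ψ (S + s) - ψ S) '' Set.Icc 0 (T - S))
        = sInf (ψ '' Set.Icc S T) - ψ S := by
      rw [himg, skz_sInf_sub _ (neST.image ψ) (hbd S T hS)]
    have hG : ψ S - Gamma1 ψ S = m S := by
      unfold Gamma1
      ring_nf
      rfl
    rw [hmain S T hS hST, hinf]
    constructor
    · rintro ⟨h1, h2⟩
      exact ⟨by linarith, by linarith⟩
    · rintro ⟨h1, h2⟩
      exact ⟨by linarith, by linarith⟩
  · intro S δ hS hδ hGS
    constructor
    · intro hzero a ha b hb hab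
      have h := (hmain a b (hS.trans ha.1) hab).1 (hzero b hb)
      have hGa : Gamma1 ψ a = 0 := hzero a ha
      have hma : ψ a - Gamma1 ψ a = m a := by unfold Gamma1; ring_nf; rfl
      rw [hGa, sub_zero] at hma
      linarith [h.2, hma ▸ h.2]
    · intro hanti T hT
      rw [hmain S T hS hT.1]
      have hST : ∀ u ∈ Set.Icc S T, u ∈ Set.Icc S (S + δ) := fun u hu =>
        ⟨hu.1, hu.2.trans hT.2⟩
      have hTmem : T ∈ Set.Icc S (S + δ) := hT
      constructor
      · apply le_antisymm
        · apply le_csInf ((Set.nonempty_Icc.2 hT.1).image ψ)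
          rintro _ ⟨u, hu, rfl⟩
          exact hanti (hST u hu) hTmem hu.2
        · exact csInf_le (hbd S T hS) ⟨T, ⟨hT.1, le_rfl⟩, rfl⟩
      · have hmS : ψ S - Gamma1 ψ S = m S := by unfold Gamma1; ring_nf; rfl
        rw [hGS, sub_zero] at hmS
        rw [← hmS]
        exact hanti ⟨le_rfl, by linarith⟩ hTmem hT.1


end
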